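/- Rounding without energy increase: for every x ∈ X there exists a labeling s ∈ ∏_{i∈V} S_i such that E(δ(s)) ≤ E(x); i.e. every relaxed feasible point is dominated in energy by some discrete feasible point. -/
import Mathlib


/-- Rounding without energy increase: every relaxed feasible point is dominated
in energy by the indicator vector of some labeling. -/
theorem stmt3 (V : Type) [Fintype V] [DecidableEq V] [Nonempty V]
    (S : V → Type) [∀ i, Fintype (S i)] [∀ i, DecidableEq (S i)] [∀ i, Nonempty (S i)]
    (K : Type) [Fintype K] (C : K → Finset V)
    (f : (k : K) → ((i : C k) → S i.1) → ℝ)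
    (E : ((i : V) → S i → ℝ) → ℝ)
    (hE : ∀ x, E x = ∑ k, ∑ s : (i : C k) → S i.1, f k s * ∏ i : C k, x i.1 (s i))
    (X : Set ((i : V) → S i → ℝ))
    (hX : X = {x | ∀ i, (∀ t, 0 ≤ x i t) ∧ (∑ t, x i t) = 1})
    (δ : ((i : V) → S i) → ((i : V) → S i → ℝ))
    (hδ : ∀ s i t, δ s i t = if t = s i then (1 : ℝ) else 0) :
    ∀ x ∈ X, ∃ s : (i : V) → S i, E (δ s) ≤ E x := by
  intro x hx
  rw [hX] at hx
  have hx0 : ∀ i t, 0 ≤ x i t := fun i => (hx i).1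
  have hx1 : ∀ i, (∑ t, x i t) = 1 := fun i => (hx i).2
  -- probability weights
  set p : ((i : V) → S i) → ℝ := fun s => ∏ i, x i (s i) with hp
  have hp0 : ∀ s, 0 ≤ p s := fun s => Finset.prod_nonneg fun i _ => hx0 i (s i)
  have hp1 : (∑ s, p s) = 1 := by
    rw [hp]
    rw [← Fintype.prod_sum (fun i (t : S i) => x i t)]
    simp [hx1]
  -- energy of an indicator
  have hEδ : ∀ s : (i : V) → S i, E (δ s) = ∑ k, f k (fun i => s i.1) := by
    intro s
    rw [hE]
    refine Finset.sum_congr rfl fun k _ => ?_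
    rw [Fintype.sum_eq_single (fun i : C k => s i.1)]
    · have : (∏ i : C k, δ s i.1 (s i.1)) = 1 := by
        refine Finset.prod_eq_one fun i _ => ?_
        rw [hδ]; simp
      rw [this, mul_one]
    · intro t ht
      have : ∃ i : C k, t i ≠ s i.1 := by
        by_contra h
        push_neg at h
        exact ht (funext fun i => h i)
      obtain ⟨i, hi⟩ := this
      have : (∏ j : C k, δ s j.1 (t j)) = 0 := by
        apply Finset.prod_eq_zero (Finset.mem_univ i)
        rw [hδ, if_neg hi]
      rw [this, mul_zero]
  -- E x is the p-average of E (δ s)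
  have key : E x = ∑ s, p s * E (δ s) := by
    have : ∀ s, p s * E (δ s) = ∑ k, p s * f k (fun i => s i.1) := by
      intro s; rw [hEδ, Finset.mul_sum]
    simp_rw [this]
    rw [Finset.sum_comm, hE]
    refine Finset.sum_congr rfl fun k _ => ?_
    -- split the product over C k and its complement
    have hsplit : ∀ s : (i : V) → S i,
        p s = (∏ i : C k, x i.1 (s i.1)) * ∏ i : {i : V // i ∉ C k}, x i.1 (s i.1) := by
      intro s
      rw [hp]
      have := (Fintype.prod_subtype_mul_prod_subtype (fun i => i ∈ C k)
        (fun i => x i (s i))).symm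
      convert this using 2
      exact Finset.prod_congr (congrArg (fun i => @Finset.univ _ i) (Subsingleton.elim _ _))
        (fun _ _ => rfl)
    -- use the equivalence between Π i, S i and pairs
    rw [← Equiv.sum_comp (Equiv.piEquivPiSubtypeProd (fun i => i ∈ C k) S).symm
      (fun s => p s * f k (fun i => s i.1))]
    rw [Fintype.sum_prod_type]
    refine Finset.sum_congr rfl fun a _ => ?_
    have ha : ∀ b (i : C k),
        (Equiv.piEquivPiSubtypeProd (fun i => i ∈ C k) S).symm (a, b) i.1 = a i := by
      intro b i
      simp [Equiv.piEquivPiSubtypeProd, i.2]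
    have hb : ∀ b (i : {i : V // i ∉ C k}),
        (Equiv.piEquivPiSubtypeProd (fun i => i ∈ C k) S).symm (a, b) i.1 = b i := by
      intro b i
      simp [Equiv.piEquivPiSubtypeProd, i.2]
    have : ∀ b : (i : {i : V // i ∉ C k}) → S i.1,
        p ((Equiv.piEquivPiSubtypeProd (fun i => i ∈ C k) S).symm (a, b))
          * f k (fun i => (Equiv.piEquivPiSubtypeProd (fun i => i ∈ C k) S).symm (a, b) i.1)
        = ((∏ i : C k, x i.1 (a i)) * f k a) * ∏ i : {i : V // i ∉ C k}, x i.1 (b i) := by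
      intro b
      rw [hsplit]
      have h1 : (fun i : C k =>
          (Equiv.piEquivPiSubtypeProd (fun i => i ∈ C k) S).symm (a, b) i.1) = a :=
        funext fun i => ha b i
      have h2 : (∏ i : C k,
          x i.1 ((Equiv.piEquivPiSubtypeProd (fun i => i ∈ C k) S).symm (a, b) i.1))
          = ∏ i : C k, x i.1 (a i) :=
        Finset.prod_congr rfl fun i _ => by rw [ha b i]
      have h3 : (∏ i : {i : V // i ∉ C k},
          x i.1 ((Equiv.piEquivPiSubtypeProd (fun i => i ∈ C k) S).symm (a, b) i.1))
          = ∏ i : {i : V // i ∉ C k}, x i.1 (b i) :=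
        Finset.prod_congr rfl fun i _ => by rw [hb b i]
      rw [h1, h2, h3]; ring
    simp_rw [this]
    rw [← Finset.mul_sum]
    have hcompl : (∑ b : (i : {i : V // i ∉ C k}) → S i.1,
        ∏ i : {i : V // i ∉ C k}, x i.1 (b i)) = 1 := by
      rw [← Fintype.prod_sum (fun (i : {i : V // i ∉ C k}) (t : S i.1) => x i.1 t)]
      simp [hx1]
    rw [hcompl, mul_one]
    ring
  -- pick the minimizer
  obtain ⟨s₀, _, hs₀⟩ := Finset.exists_min_image Finset.univ (fun s => E (δ s))
    (Finset.univ_nonempty)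
  refine ⟨s₀, ?_⟩
  have : E (δ s₀) = ∑ s, p s * E (δ s₀) := by
    rw [← Finset.sum_mul, hp1, one_mul]
  rw [this, key]
  exact Finset.sum_le_sum fun s _ =>
    mul_le_mul_of_nonneg_left (hs₀ s (Finset.mem_univ s)) (hp0 s)
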